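/- Conditioned on the values X_{i,Π(i)} = xᵢ for all i, the probability that the perfect matching Π is stable equals ∏_{{i,j}∉Π} (1 - xᵢxⱼ). -/

import Mathlib

open MeasureTheory Finset

section Aux

lemma aux_Iic (a : ℝ) (ha : a ∈ Set.Icc (0:ℝ) 1) :
    (volume.restrict (Set.Icc (0:ℝ) 1)) (Set.Iic a) = ENNReal.ofReal a := by
  rw [Measure.restrict_apply measurableSet_Iic]
  have : Set.Iic a ∩ Set.Icc (0:ℝ) 1 = Set.Icc 0 a := by
    ext t; simp only [Set.mem_inter_iff, Set.mem_Iic, Set.mem_Icc]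
    constructor
    · rintro ⟨h1, h2, _⟩; exact ⟨h2, h1⟩
    · rintro ⟨h1, h2⟩; exact ⟨h2, h1, h2.trans ha.2⟩
  rw [this, Real.volume_Icc, sub_zero]

lemma aux_Ioi (a : ℝ) (ha : a ∈ Set.Icc (0:ℝ) 1) :
    (volume.restrict (Set.Icc (0:ℝ) 1)) (Set.Ioi a) = ENNReal.ofReal (1 - a) := by
  rw [Measure.restrict_apply measurableSet_Ioi]
  have : Set.Ioi a ∩ Set.Icc (0:ℝ) 1 = Set.Ioc a 1 := by
    ext t; simp only [Set.mem_inter_iff, Set.mem_Ioi, Set.mem_Icc, Set.mem_Ioc]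
    constructor
    · rintro ⟨h1, _, h3⟩; exact ⟨h1, h3⟩
    · rintro ⟨h1, h2⟩; exact ⟨h1, ha.1.trans h1.le, h2⟩
  rw [this, Real.volume_Ioc]

lemma aux_univ : (volume.restrict (Set.Icc (0:ℝ) 1)) Set.univ = 1 := by
  rw [Measure.restrict_apply MeasurableSet.univ, Set.univ_inter, Real.volume_Icc]
  norm_num

end Aux

set_option maxHeartbeats 2000000

/-- Preferences are generated by i.i.d. Uniform[0,1] variables `ω (i,j) = X_{i,j}`.
Conditioned on the values `X_{i,Π(i)} = xᵢ` (so that only the variables `X_{i,j}`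
for `{i,j} ∉ Π` remain random, i.i.d. uniform on `[0,1]`), the probability that the
perfect matching `Π` (given as a fixed-point-free involution `f`) is stable equals
`∏_{{i,j}∉Π} (1 - xᵢxⱼ)`. -/
theorem stmt8 (n : ℕ) (f : Fin n → Fin n) (hinv : ∀ i, f (f i) = i)
    (hfix : ∀ i, f i ≠ i) (x : Fin n → ℝ) (hx : ∀ i, x i ∈ Set.Icc (0:ℝ) 1) :
    Measure.pi (fun _ : Fin n × Fin n => volume.restrict (Set.Icc (0:ℝ) 1))
        {ω : Fin n × Fin n → ℝ | ∀ i j : Fin n, i < j → f i ≠ j →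
          (x i < ω (i, j) ∨ x j < ω (j, i))}
      = ENNReal.ofReal
          (∏ i : Fin n, ∏ j ∈ univ.filter (fun j => i < j ∧ f i ≠ j),
            (1 - x i * x j)) := by
  set μ : Measure ℝ := volume.restrict (Set.Icc (0:ℝ) 1) with hμ
  set P : Finset (Fin n × Fin n) := univ.filter (fun p => p.1 < p.2 ∧ f p.1 ≠ p.2) with hP
  have hmemP : ∀ p : Fin n × Fin n, p ∈ P ↔ p.1 < p.2 ∧ f p.1 ≠ p.2 := by
    intro p; simp [hP]
  have hswap_not : ∀ p ∈ P, p.swap ∉ P := by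
    intro p hp hps
    rw [hmemP] at hp hps
    exact absurd (hp.1.trans hps.1) (lt_irrefl _)
  -- the boxes
  set s : Finset (Fin n × Fin n) → (Fin n × Fin n) → Set ℝ := fun S c =>
    if c ∈ P then (if c ∈ S then Set.Iic (x c.1) else Set.Ioi (x c.1))
    else if c.swap ∈ P then (if c.swap ∈ S then Set.Ioi (x c.1) else Set.univ)
    else Set.univ with hs
  have hsmeas : ∀ S c, MeasurableSet (s S c) := by
    intro S c
    simp only [hs]
    split_ifs <;> measurability
  -- the event is the disjoint union of the boxes
  have hEq : {ω : Fin n × Fin n → ℝ | ∀ i j : Fin n, i < j → f i ≠ j →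
      (x i < ω (i, j) ∨ x j < ω (j, i))}
      = ⋃ S ∈ P.powerset, Set.univ.pi (s S) := by
    ext ω
    simp only [Set.mem_setOf_eq, Set.mem_iUnion, mem_powerset]
    constructor
    · intro hω
      refine ⟨P.filter (fun p => ω p ≤ x p.1), filter_subset _ _, ?_⟩
      intro c _
      simp only [hs]
      by_cases hc : c ∈ P
      · simp only [hc, if_true, mem_filter]
        by_cases hle : ω c ≤ x c.1
        · simp [hc, hle]
        · simp [hc, hle, lt_of_not_ge hle]
      · simp only [hc, if_false]
        by_cases hcs : c.swap ∈ P
        · simp only [hcs, if_true, mem_filter]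
          by_cases hcs2 : ω c.swap ≤ x c.swap.1
          · simp only [hcs, hcs2, and_self, if_true]
            have h1 := (hmemP _).mp hcs
            have := hω c.2 c.1 h1.1 h1.2
            rcases this with h | h
            · exact absurd h (not_lt.mpr (by exact hcs2))
            · simpa using h
          · rw [if_neg]
            · trivial
            · simp only [not_and, not_le]
              intro _
              exact lt_of_not_ge hcs2
        · simp [hcs]
    · rintro ⟨S, hS, hω⟩
      intro i j hij hfij
      have hpP : ((i, j) : Fin n × Fin n) ∈ P := (hmemP _).mpr ⟨hij, hfij⟩
      by_cases hpS : ((i, j) : Fin n × Fin n) ∈ S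
      · right
        have := hω ((i, j) : Fin n × Fin n).swap (Set.mem_univ _)
        simp only [hs, Prod.swap_prod_mk] at this
        have hnot : ((j, i) : Fin n × Fin n) ∉ P := by
          simpa using hswap_not _ hpP
        rw [if_neg hnot] at this
        simpa [hpP, hpS] using this
      · left
        have := hω ((i, j) : Fin n × Fin n) (Set.mem_univ _)
        simp only [hs, if_pos hpP, if_neg hpS] at this
        simpa using this
  rw [hEq]
  -- disjointness
  have hdisj : (↑P.powerset : Set (Finset (Fin n × Fin n))).PairwiseDisjoint
      (fun S => Set.univ.pi (s S)) := by
    intro S hS T hT hST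
    simp only [Function.onFun]
    rw [Set.disjoint_left]
    intro ω hωS hωT
    have : ∃ p, (p ∈ S ∧ p ∉ T) ∨ (p ∈ T ∧ p ∉ S) := by
      by_contra h
      push_neg at h
      exact hST (Finset.ext fun p => ⟨(h p).1, (h p).2⟩)
    obtain ⟨p, hcase⟩ := this
    simp only [mem_coe, mem_powerset] at hS hT
    rcases hcase with ⟨h1, h2⟩ | ⟨h1, h2⟩
    · have hp : p ∈ P := hS h1
      have e1 := hωS p (Set.mem_univ _)
      have e2 := hωT p (Set.mem_univ _)
      simp only [hs, if_pos hp, if_pos h1, if_neg h2] at e1 e2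
      exact absurd (Set.mem_Iic.mp e1) (not_le.mpr e2)
    · have hp : p ∈ P := hT h1
      have e1 := hωS p (Set.mem_univ _)
      have e2 := hωT p (Set.mem_univ _)
      simp only [hs, if_pos hp, if_pos h1, if_neg h2] at e1 e2
      exact absurd (Set.mem_Iic.mp e2) (not_le.mpr e1)
  rw [measure_biUnion_finset hdisj (fun S _ => MeasurableSet.univ_pi (hsmeas S))]
  -- compute the measure of each box
  have hbox : ∀ S ∈ P.powerset,
      Measure.pi (fun _ : Fin n × Fin n => μ) (Set.univ.pi (s S))
      = ∏ p ∈ P, (if p ∈ S then ENNReal.ofReal (x p.1) * ENNReal.ofReal (1 - x p.2)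
          else ENNReal.ofReal (1 - x p.1)) := by
    intro S hS
    rw [mem_powerset] at hS
    rw [Measure.pi_pi]
    have hone : ∀ c ∈ (univ : Finset (Fin n × Fin n)) \ (P ∪ P.image Prod.swap),
        μ (s S c) = 1 := by
      intro c hc
      simp only [mem_sdiff, mem_union, mem_image, not_or] at hc
      have hc1 : c ∉ P := hc.2.1
      have hc2 : c.swap ∉ P := by
        intro h
        exact hc.2.2 ⟨c.swap, h, Prod.swap_swap c⟩
      simp only [hs, if_neg hc1, if_neg hc2]
      exact aux_univ
    have hdisj2 : Disjoint P (P.image Prod.swap) := by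
      rw [Finset.disjoint_left]
      intro p hp hp'
      simp only [mem_image] at hp'
      obtain ⟨q, hq, hqe⟩ := hp'
      have : q.swap ∉ P := hswap_not q hq
      rw [hqe] at this
      exact this hp
    calc ∏ c : Fin n × Fin n, μ (s S c)
        = ∏ c ∈ P ∪ P.image Prod.swap, μ (s S c) := by
          refine (Finset.prod_subset (subset_univ _) ?_).symm
          intro c _ hc
          exact hone c (by simp [mem_sdiff, hc])
      _ = (∏ c ∈ P, μ (s S c)) * ∏ c ∈ P.image Prod.swap, μ (s S c) :=
          Finset.prod_union hdisj2
      _ = (∏ p ∈ P, μ (s S p)) * ∏ p ∈ P, μ (s S p.swap) := by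
          congr 1
          exact Finset.prod_image (fun a _ b _ h => Prod.swap_injective h)
      _ = ∏ p ∈ P, (μ (s S p) * μ (s S p.swap)) := (Finset.prod_mul_distrib).symm
      _ = _ := by
          apply Finset.prod_congr rfl
          intro p hp
          have hps : p.swap ∉ P := hswap_not p hp
          have hss : p.swap.swap = p := Prod.swap_swap p
          by_cases hpS : p ∈ S
          · simp only [hs, if_pos hp, if_pos hpS, if_neg hps, hss]
            rw [aux_Iic _ (hx p.1), aux_Ioi _ (hx p.swap.1)]
            simp
          · simp only [hs, if_pos hp, if_neg hpS, if_neg hps, hss]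
            rw [aux_Ioi _ (hx p.1), aux_univ, mul_one]
  rw [Finset.sum_congr rfl hbox]
  -- sum over subsets
  have hsum : ∑ S ∈ P.powerset, ∏ p ∈ P,
      (if p ∈ S then ENNReal.ofReal (x p.1) * ENNReal.ofReal (1 - x p.2)
        else ENNReal.ofReal (1 - x p.1))
      = ∏ p ∈ P, (ENNReal.ofReal (x p.1) * ENNReal.ofReal (1 - x p.2)
          + ENNReal.ofReal (1 - x p.1)) := by
    rw [Finset.prod_add]
    apply Finset.sum_congr rfl
    intro S hS
    rw [mem_powerset] at hS
    rw [Finset.prod_ite]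
    congr 1
    · apply Finset.prod_congr _ (fun _ _ => rfl)
      ext p; simp only [mem_filter]
      exact ⟨fun h => h.2, fun h => ⟨hS h, h⟩⟩
    · apply Finset.prod_congr _ (fun _ _ => rfl)
      ext p; simp [mem_filter, mem_sdiff]
  rw [hsum]
  -- convert each factor
  have hfac : ∀ p ∈ P, ENNReal.ofReal (x p.1) * ENNReal.ofReal (1 - x p.2)
      + ENNReal.ofReal (1 - x p.1) = ENNReal.ofReal (1 - x p.1 * x p.2) := by
    intro p _
    have h1 := hx p.1
    have h2 := hx p.2
    rw [← ENNReal.ofReal_mul h1.1, ← ENNReal.ofReal_add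
      (mul_nonneg h1.1 (by linarith [h2.2])) (by linarith [h1.2])]
    ring_nf
  rw [Finset.prod_congr rfl hfac]
  rw [← ENNReal.ofReal_prod_of_nonneg (fun p hp => by
    have h1 := hx p.1; have h2 := hx p.2
    nlinarith [h1.1, h1.2, h2.1, h2.2])]
  congr 1
  -- reindex the product
  rw [hP]
  rw [Finset.prod_filter, Fintype.prod_prod_type]
  apply Finset.prod_congr rfl
  intro i _
  rw [Finset.prod_filter]
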